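/- Let A be an n×n matrix with spectral radius r(A) = 1 (so there is an eigenvalue λ of A with |λ| = 1). If f ∈ ℂ[z₁,z₂] satisfies f(A, 0) = 0 (where f(A,0) means substituting A for z₁ and the zero matrix for z₂), then f(λ, 0) = 0. Consequently, if f is Γ-distinguished then (λ, 0) ∈ bΓ, which is impossible since |0| ≠ 1; hence if (A,0) is annihilated by a Γ-distinguished polynomial and ω(A) ≤ 1, then r(A) < 1. -/

import Mathlib

noncomputable section

def G2 : Set (ℂ × ℂ) :=
  {w | ∃ z₁ z₂ : ℂ, ‖z₁‖ < 1 ∧ ‖z₂‖ < 1 ∧ w = (z₁ + z₂, z₁ * z₂)}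

def GammaSet : Set (ℂ × ℂ) :=
  {w | ∃ z₁ z₂ : ℂ, ‖z₁‖ ≤ 1 ∧ ‖z₂‖ ≤ 1 ∧ w = (z₁ + z₂, z₁ * z₂)}

def bGamma : Set (ℂ × ℂ) :=
  {w | ∃ z₁ z₂ : ℂ, ‖z₁‖ = 1 ∧ ‖z₂‖ = 1 ∧ w = (z₁ + z₂, z₁ * z₂)}

def Zset (p : MvPolynomial (Fin 2) ℂ) : Set (ℂ × ℂ) :=
  {w | MvPolynomial.eval ![w.1, w.2] p = 0}

def GammaDistinguished (p : MvPolynomial (Fin 2) ℂ) : Prop :=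
  (Zset p ∩ G2).Nonempty ∧ Zset p ∩ (GammaSet \ G2) ⊆ bGamma

/-- Evaluation of a two-variable polynomial on a pair of commuting elements. -/
def opEval2 {A : Type*} [Ring A] [Algebra ℂ A] (p : MvPolynomial (Fin 2) ℂ) (S P : A) : A :=
  p.support.sum fun m => (MvPolynomial.coeff m p) • (S ^ (m 0) * P ^ (m 1))

/-- Numerical radius of an n×n complex matrix. -/
def numRadius {n : ℕ} (A : Matrix (Fin n) (Fin n) ℂ) : ℝ :=
  sSup {r : ℝ | ∃ x : EuclideanSpace ℂ (Fin n), ‖x‖ = 1 ∧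
    r = ‖(inner ℂ x (Matrix.toEuclideanLin A x) : ℂ)‖}

/-- Evaluating the one-variable polynomial `f(z,0)` at `S` gives `opEval2 f S 0`. -/
lemma aux_aeval_eq_opEval2 {B : Type*} [Ring B] [Algebra ℂ B]
    (f : MvPolynomial (Fin 2) ℂ) (S : B) :
    Polynomial.aeval S (MvPolynomial.aeval ![Polynomial.X, 0] f : Polynomial ℂ) =
      opEval2 f S 0 := by
  rw [MvPolynomial.aeval_def, MvPolynomial.eval₂_eq', map_sum, opEval2]
  refine Finset.sum_congr rfl fun m _ => ?_
  simp [Fin.prod_univ_two, Algebra.smul_def, mul_assoc]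

theorem stmt6 {n : ℕ} (A : Matrix (Fin n) (Fin n) ℂ)
    (f : MvPolynomial (Fin 2) ℂ) (hf : opEval2 f A 0 = 0) :
    (∀ μ ∈ spectrum ℂ A, ‖μ‖ = 1 →
      MvPolynomial.eval ![μ, 0] f = 0 ∧ (GammaDistinguished f → (μ, (0 : ℂ)) ∈ bGamma)) ∧
    (GammaDistinguished f → numRadius A ≤ 1 → spectralRadius ℂ A < 1) := by
  set q : Polynomial ℂ := MvPolynomial.aeval ![Polynomial.X, 0] f with hqdef
  have hqA : Polynomial.aeval A q = 0 := (aux_aeval_eq_opEval2 f A).trans hf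
  -- evaluation of q at a scalar μ equals f(μ, 0)
  have hqeval : ∀ μ : ℂ, Polynomial.eval μ q = MvPolynomial.eval ![μ, 0] f := by
    intro μ
    have h1 : Polynomial.aeval μ q = opEval2 f μ 0 := aux_aeval_eq_opEval2 f μ
    rw [Polynomial.coe_aeval_eq_eval] at h1
    rw [h1, opEval2, MvPolynomial.eval_eq']
    refine Finset.sum_congr rfl fun m _ => ?_
    simp [Fin.prod_univ_two, smul_eq_mul, mul_assoc]
  -- part 1
  have part1 : ∀ μ ∈ spectrum ℂ A, ‖μ‖ = 1 →
      MvPolynomial.eval ![μ, 0] f = 0 ∧ (GammaDistinguished f → (μ, (0 : ℂ)) ∈ bGamma) := by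
    intro μ hμ hμ1
    have h1 : Polynomial.eval μ q ∈ spectrum ℂ (Polynomial.aeval A q) :=
      spectrum.subset_polynomial_aeval A q ⟨μ, hμ, rfl⟩
    rw [hqA] at h1
    have h0 : MvPolynomial.eval ![μ, 0] f = 0 := by
      rw [← hqeval μ]
      by_contra h
      exact spectrum.mem_iff.mp h1 (by
        simpa using (Ne.isUnit h).map (algebraMap ℂ (Matrix (Fin n) (Fin n) ℂ)))
    refine ⟨h0, fun hd => ?_⟩
    refine hd.2 ⟨h0, ⟨μ, 0, le_of_eq hμ1, by simp, by simp⟩, ?_⟩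
    rintro ⟨z₁, z₂, hz₁, hz₂, heq⟩
    have he1 : μ = z₁ + z₂ := congrArg Prod.fst heq
    have he2 : (0 : ℂ) = z₁ * z₂ := congrArg Prod.snd heq
    rcases mul_eq_zero.mp he2.symm with h | h
    · subst h; rw [he1, zero_add] at hμ1; exact absurd hμ1 (ne_of_lt hz₂)
    · subst h; rw [he1, add_zero] at hμ1; exact absurd hμ1 (ne_of_lt hz₁)
  refine ⟨part1, fun hd hω => ?_⟩
  -- every point of the spectrum has modulus < 1
  have key : ∀ μ ∈ spectrum ℂ A, ‖μ‖₊ < 1 := by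
    intro μ hμ
    -- |μ| ≠ 1
    have hne : ‖μ‖ ≠ 1 := by
      intro h1
      obtain ⟨z₁, z₂, hz₁, hz₂, heq⟩ := (part1 μ hμ h1).2 hd
      have he2 : (0 : ℂ) = z₁ * z₂ := congrArg Prod.snd heq
      have : ‖z₁ * z₂‖ = 1 := by rw [norm_mul, hz₁, hz₂, one_mul]
      rw [← he2] at this
      simp at this
    -- |μ| ≤ 1 via the numerical radius
    have hle : ‖μ‖ ≤ 1 := by
      have hspec : spectrum ℂ (Matrix.toEuclideanLin A) = spectrum ℂ A :=
        AlgEquiv.spectrum_eq (Matrix.toLinAlgEquiv (PiLp.basisFun 2 ℂ (Fin n))) _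
      have hev : Module.End.HasEigenvalue (Matrix.toEuclideanLin A) μ :=
        Module.End.hasEigenvalue_iff_mem_spectrum.mpr (hspec ▸ hμ)
      obtain ⟨v, hv⟩ := hev.exists_hasEigenvector
      have hv0 : v ≠ 0 := hv.right
      set x : EuclideanSpace ℂ (Fin n) := (‖v‖ : ℂ)⁻¹ • v with hxdef
      have hnx : ‖x‖ = 1 := by
        rw [hxdef, norm_smul]
        have : ‖v‖ ≠ 0 := norm_ne_zero_iff.mpr hv0
        simp [Complex.norm_real, abs_of_nonneg (norm_nonneg v), inv_mul_cancel₀ this]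
      have hax : Matrix.toEuclideanLin A x = μ • x := by
        rw [hxdef, map_smul, hv.apply_eq_smul, smul_comm]
      have hinner : (inner ℂ x (Matrix.toEuclideanLin A x) : ℂ) = μ := by
        rw [hax, inner_smul_right, inner_self_eq_norm_sq_to_K, hnx]
        simp
      -- boundedness of the numerical range
      set L := LinearMap.toContinuousLinearMap (Matrix.toEuclideanLin A)
      have hbdd : BddAbove {r : ℝ | ∃ x : EuclideanSpace ℂ (Fin n), ‖x‖ = 1 ∧
          r = ‖(inner ℂ x (Matrix.toEuclideanLin A x) : ℂ)‖} := by
        refine ⟨‖L‖, ?_⟩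
        rintro r ⟨y, hy, rfl⟩
        have h1 : ‖(inner ℂ y (Matrix.toEuclideanLin A y) : ℂ)‖ ≤
            ‖y‖ * ‖Matrix.toEuclideanLin A y‖ := by
          simpa using
            norm_inner_le_norm (𝕜 := ℂ) y (Matrix.toEuclideanLin A y)
        have h2 : ‖Matrix.toEuclideanLin A y‖ = ‖L y‖ := rfl
        have h3 : ‖L y‖ ≤ ‖L‖ * ‖y‖ := L.le_opNorm y
        calc ‖(inner ℂ y (Matrix.toEuclideanLin A y) : ℂ)‖
            ≤ ‖y‖ * ‖Matrix.toEuclideanLin A y‖ := h1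
          _ = ‖L y‖ := by rw [hy, one_mul, h2]
          _ ≤ ‖L‖ * ‖y‖ := h3
          _ = ‖L‖ := by rw [hy, mul_one]
      have hmem : ‖μ‖ ∈ {r : ℝ | ∃ x : EuclideanSpace ℂ (Fin n), ‖x‖ = 1 ∧
          r = ‖(inner ℂ x (Matrix.toEuclideanLin A x) : ℂ)‖} :=
        ⟨x, hnx, by rw [hinner]⟩
      exact le_trans (le_csSup hbdd hmem) hω
    have : ‖μ‖ < 1 := lt_of_le_of_ne hle hne
    simpa [← NNReal.coe_lt_coe, coe_nnnorm] using this
  -- conclude: the spectral radius is < 1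
  rcases Set.eq_empty_or_nonempty (spectrum ℂ A) with hs | hs
  · rw [spectralRadius, hs]
    simp
  · have hfin := Matrix.finite_spectrum A
    obtain ⟨μ0, hμ0, hmax⟩ := Finset.exists_max_image hfin.toFinset (fun μ => ‖μ‖₊)
      (by simpa [Set.Finite.toFinset_nonempty] using hs)
    have hμ0s : μ0 ∈ spectrum ℂ A := hfin.mem_toFinset.mp hμ0
    have h1 : spectralRadius ℂ A ≤ (‖μ0‖₊ : ENNReal) := by
      rw [spectralRadius]
      exact iSup₂_le fun μ hμ => ENNReal.coe_le_coe.mpr (hmax μ (hfin.mem_toFinset.mpr hμ))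
    refine lt_of_le_of_lt h1 ?_
    exact_mod_cast key μ0 hμ0s
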